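/- Let Σ_S, Σ_U, D be symmetric positive definite matrices of the same size with D ⪯ Σ_S, and let Θ satisfy 0 ≺ Θ ⪯ Σ_S (block matrices with Θ1 ⪯ D1 as its first diagonal block). Then det(Σ_S)·det(Θ2 + Σ_{U2}) / (det(Θ)·det(D2 + Σ_{U2})) ≥ det(Σ_S + Σ_U) / (det(D1 + Σ_{U1})·det(D2 + Σ_{U2})), where subscripts 1 and 2 denote the two diagonal blocks of each matrix. -/

import Mathlib

open Matrix

set_option linter.unusedSectionVars false

namespace Stmt9Aux

open scoped MatrixOrder

variable {n : Type*} [Fintype n] [DecidableEq n]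

lemma conj_posDef {A C : Matrix n n ℝ} (hA : A.PosDef) (hC : C.det ≠ 0) :
    (Cᴴ * A * C).PosDef := by
  refine PosDef.of_dotProduct_mulVec_pos (isHermitian_conjTranspose_mul_mul C hA.1) fun x hx => ?_
  have hCx : C *ᵥ x ≠ 0 := fun h => hx <|
    Matrix.mulVec_injective_iff_isUnit.mpr ((isUnit_iff_isUnit_det C).mpr hC.isUnit) <|
      by rw [h, mulVec_zero]
  simpa only [star_mulVec, dotProduct_mulVec, vecMul_vecMul] using hA.dotProduct_mulVec_pos hCx

lemma posDef_of_posSemidef_det_ne_zero {A : Matrix n n ℝ} (hA : A.PosSemidef)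
    (h : A.det ≠ 0) : A.PosDef := by
  refine PosDef.of_dotProduct_mulVec_pos hA.1 fun x hx => ?_
  rcases lt_or_eq_of_le (hA.dotProduct_mulVec_nonneg x) with hlt | heq
  · exact hlt
  · exfalso
    have h0 : A *ᵥ x = 0 := (hA.dotProduct_mulVec_zero_iff x).mp heq.symm
    exact hx <| Matrix.mulVec_injective_iff_isUnit.mpr
      ((isUnit_iff_isUnit_det A).mpr h.isUnit) <| by rw [h0, mulVec_zero]

lemma one_le_det_one_add {P : Matrix n n ℝ} (hP : P.PosSemidef) :
    1 ≤ ((1 : Matrix n n ℝ) + P).det := by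
  have hsp := hP.1.spectral_theorem
  set U : Matrix n n ℝ := (hP.1.eigenvectorUnitary : Matrix n n ℝ) with hUdef
  have hU : U * star U = 1 := mem_unitaryGroup_iff.mp hP.1.eigenvectorUnitary.2
  set d : n → ℝ := RCLike.ofReal ∘ hP.1.eigenvalues with hd
  have h1 : (1 : Matrix n n ℝ) + P = U * (1 + diagonal d) * star U := by
    rw [Matrix.mul_add, Matrix.add_mul, Matrix.mul_one, hU, hsp, Unitary.conjStarAlgAut_apply]
  have h2 : ((1 : Matrix n n ℝ) + P).det = (1 + diagonal d).det := by
    rw [h1, det_mul, det_mul, mul_assoc, mul_comm ((1 + diagonal d).det),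
      ← mul_assoc, ← det_mul, hU, det_one, one_mul]
  rw [h2, ← diagonal_one, diagonal_add, det_diagonal]
  calc (1 : ℝ) = ∏ _i : n, 1 := by simp
    _ ≤ ∏ i : n, ((1 : n → ℝ) + d) i := by
        refine Finset.prod_le_prod (fun i _ => by norm_num) fun i _ => ?_
        have hev := hP.eigenvalues_nonneg i
        simp only [hd, Pi.add_apply, Pi.one_apply, Function.comp_apply,
          RCLike.ofReal_real_eq_id, id_eq]
        linarith

lemma sqrt_det_ne_zero {A : Matrix n n ℝ} (hA : A.PosDef) :
    (CFC.sqrt A).det ≠ 0 := by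
  have h : (CFC.sqrt A).det * (CFC.sqrt A).det = A.det := by
    rw [← det_mul, CFC.sqrt_mul_sqrt_self A hA.posSemidef.nonneg]
  intro h0
  rw [h0, zero_mul] at h
  exact hA.det_pos.ne h

lemma det_le_det {A B : Matrix n n ℝ} (hA : A.PosDef) (hAB : (B - A).PosSemidef) :
    A.det ≤ B.det := by
  set S := CFC.sqrt A with hSdef
  have hSdet : S.det ≠ 0 := sqrt_det_ne_zero hA
  have hSherm : Sᴴ = S := (CFC.sqrt_nonneg A).posSemidef.1
  haveI : Invertible S := S.invertibleOfIsUnitDet hSdet.isUnit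
  have hSS : S * S = A := CFC.sqrt_mul_sqrt_self A hA.posSemidef.nonneg
  have hSi : S * S⁻¹ = 1 := Matrix.mul_inv_of_invertible S
  have hSi' : S⁻¹ * S = 1 := Matrix.inv_mul_of_invertible S
  have key : S * (S⁻¹ * (B - A) * S⁻¹) * S = B - A := by
    calc S * (S⁻¹ * (B - A) * S⁻¹) * S
        = (S * S⁻¹) * ((B - A) * (S⁻¹ * S)) := by simp only [Matrix.mul_assoc]
      _ = B - A := by rw [hSi, hSi', one_mul, Matrix.mul_one]
  have hP : (S⁻¹ * (B - A) * S⁻¹).PosSemidef := by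
    have := hAB.conjTranspose_mul_mul_same S⁻¹
    rwa [conjTranspose_nonsing_inv, hSherm] at this
  have hBeq : B = S * (1 + S⁻¹ * (B - A) * S⁻¹) * S := by
    have h2 : S * (1 + S⁻¹ * (B - A) * S⁻¹) * S
        = S * S + S * (S⁻¹ * (B - A) * S⁻¹) * S := by noncomm_ring
    rw [h2, hSS, key]; abel
  have hBdet : B.det = A.det * (1 + S⁻¹ * (B - A) * S⁻¹).det := by
    conv_lhs => rw [hBeq]
    rw [det_mul, det_mul, ← hSS, det_mul]; ring
  rw [hBdet]
  have h1 := one_le_det_one_add hP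
  nlinarith [hA.det_pos]

lemma inv_sub_one_posSemidef {X : Matrix n n ℝ} (hX : X.PosDef)
    (h1 : ((1 : Matrix n n ℝ) - X).PosSemidef) : (X⁻¹ - 1).PosSemidef := by
  set S := CFC.sqrt X with hSdef
  have hSdet : S.det ≠ 0 := sqrt_det_ne_zero hX
  have hSherm : Sᴴ = S := (CFC.sqrt_nonneg X).posSemidef.1
  haveI : Invertible S := S.invertibleOfIsUnitDet hSdet.isUnit
  have hSS : S * S = X := CFC.sqrt_mul_sqrt_self X hX.posSemidef.nonneg
  have hSi : S * S⁻¹ = 1 := Matrix.mul_inv_of_invertible S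
  have hSi' : S⁻¹ * S = 1 := Matrix.inv_mul_of_invertible S
  have key : (S⁻¹)ᴴ * (1 - X) * S⁻¹ = X⁻¹ - 1 := by
    rw [conjTranspose_nonsing_inv, hSherm]
    have h2 : S⁻¹ * (1 - X) * S⁻¹ = S⁻¹ * S⁻¹ - S⁻¹ * X * S⁻¹ := by noncomm_ring
    have h3 : S⁻¹ * X * S⁻¹ = 1 := by
      rw [← hSS]
      calc S⁻¹ * (S * S) * S⁻¹ = (S⁻¹ * S) * (S * S⁻¹) := by simp only [Matrix.mul_assoc]
        _ = 1 := by rw [hSi, hSi', one_mul]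
    rw [h2, h3, ← Matrix.mul_inv_rev, hSS]
  exact key ▸ h1.conjTranspose_mul_mul_same S⁻¹

lemma inv_sub_inv_posSemidef {A B : Matrix n n ℝ} (hA : A.PosDef) (hB : B.PosDef)
    (hAB : (B - A).PosSemidef) : (A⁻¹ - B⁻¹).PosSemidef := by
  set S := CFC.sqrt B with hSdef
  have hSdet : S.det ≠ 0 := sqrt_det_ne_zero hB
  have hSherm : Sᴴ = S := (CFC.sqrt_nonneg B).posSemidef.1
  haveI : Invertible S := S.invertibleOfIsUnitDet hSdet.isUnit
  have hSS : S * S = B := CFC.sqrt_mul_sqrt_self B hB.posSemidef.nonneg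
  have hSi : S * S⁻¹ = 1 := Matrix.mul_inv_of_invertible S
  have hSi' : S⁻¹ * S = 1 := Matrix.inv_mul_of_invertible S
  have hTdet : (S⁻¹).det ≠ 0 := Matrix.det_ne_zero_of_left_inverse hSi
  have hTherm : (S⁻¹)ᴴ = S⁻¹ := by rw [conjTranspose_nonsing_inv, hSherm]
  set T := S⁻¹ with hTdef
  have hX : (Tᴴ * A * T).PosDef := conj_posDef hA hTdet
  have hTBT : T * B * T = 1 := by
    rw [← hSS]
    calc S⁻¹ * (S * S) * S⁻¹ = (S⁻¹ * S) * (S * S⁻¹) := by simp only [Matrix.mul_assoc]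
      _ = 1 := by rw [hSi, hSi', one_mul]
  have h1 : (1 : Matrix n n ℝ) - Tᴴ * A * T = Tᴴ * (B - A) * T := by
    rw [hTherm]
    have : T * (B - A) * T = T * B * T - T * A * T := by noncomm_ring
    rw [this, hTBT]
  have h2 : ((Tᴴ * A * T)⁻¹ - 1).PosSemidef :=
    inv_sub_one_posSemidef hX (h1 ▸ hAB.conjTranspose_mul_mul_same T)
  have h3 := h2.conjTranspose_mul_mul_same T
  have hXinv : (Tᴴ * A * T)⁻¹ = S * A⁻¹ * S := by
    rw [hTherm, hTdef, Matrix.mul_inv_rev, Matrix.mul_inv_rev, Matrix.inv_inv_of_invertible,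
      Matrix.mul_assoc]
  have h4 : Tᴴ * ((Tᴴ * A * T)⁻¹ - 1) * T = A⁻¹ - B⁻¹ := by
    rw [hXinv, hTherm]
    have e1 : T * (S * A⁻¹ * S - 1) * T = (T * S) * A⁻¹ * (S * T) - T * T := by noncomm_ring
    rw [e1, hTdef, hSi', hSi, one_mul, Matrix.mul_one, ← Matrix.mul_inv_rev, hSS]
  exact h4 ▸ h3

lemma ratio_le {A B U : Matrix n n ℝ} (hA : A.PosDef) (hB : B.PosDef) (hU : U.PosDef)
    (hAB : (B - A).PosSemidef) :
    (B + U).det * A.det ≤ (A + U).det * B.det := by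
  set R := CFC.sqrt U with hRdef
  have hRherm : Rᴴ = R := (CFC.sqrt_nonneg U).posSemidef.1
  have hRR : R * R = U := CFC.sqrt_mul_sqrt_self U hU.posSemidef.nonneg
  have expand : ∀ M : Matrix n n ℝ, M.PosDef →
      (M + U).det = M.det * (1 + Rᴴ * M⁻¹ * R).det := by
    intro M hM
    haveI : Invertible M := M.invertibleOfIsUnitDet hM.det_pos.ne'.isUnit
    have h1 : M + U = M * (1 + M⁻¹ * U) := by
      rw [Matrix.mul_add, Matrix.mul_one, ← Matrix.mul_assoc,
        Matrix.mul_inv_of_invertible, one_mul]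
    rw [h1, det_mul]
    congr 1
    rw [hRherm, ← hRR, ← Matrix.mul_assoc, det_one_add_mul_comm, Matrix.mul_assoc]
  rw [expand A hA, expand B hB]
  have hQpsd : (Rᴴ * B⁻¹ * R).PosSemidef := hB.inv.posSemidef.conjTranspose_mul_mul_same R
  have hQ : ((1 : Matrix n n ℝ) + Rᴴ * B⁻¹ * R).PosDef := Matrix.PosDef.one.add_posSemidef hQpsd
  have hdiff : ((1 + Rᴴ * A⁻¹ * R) - (1 + Rᴴ * B⁻¹ * R)).PosSemidef := by
    have e : (1 + Rᴴ * A⁻¹ * R) - (1 + Rᴴ * B⁻¹ * R) = Rᴴ * (A⁻¹ - B⁻¹) * R := by noncomm_ring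
    rw [e]
    exact (inv_sub_inv_posSemidef hA hB hAB).conjTranspose_mul_mul_same R
  have hle := det_le_det hQ hdiff
  have h2 := mul_le_mul_of_nonneg_left hle (mul_pos hA.det_pos hB.det_pos).le
  nlinarith [h2]

variable {p q : Type*} [Fintype p] [DecidableEq p] [Fintype q] [DecidableEq q]

lemma toBlocks₁₁_posDef {M : Matrix (p ⊕ q) (p ⊕ q) ℝ} (hM : M.PosDef) :
    M.toBlocks₁₁.PosDef := by
  have hpsd : M.toBlocks₁₁.PosSemidef := hM.posSemidef.submatrix Sum.inl
  refine PosDef.of_dotProduct_mulVec_pos hpsd.1 fun x hx => ?_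
  have hy : Sum.elim x (0 : q → ℝ) ≠ 0 := by
    intro h; apply hx; funext i; exact congrFun h (Sum.inl i)
  have h := hM.dotProduct_mulVec_pos hy
  rw [← fromBlocks_toBlocks M, fromBlocks_mulVec, Function.star_sumElim,
    sumElim_dotProduct_sumElim] at h
  simpa using h

lemma toBlocks₂₂_posDef {M : Matrix (p ⊕ q) (p ⊕ q) ℝ} (hM : M.PosDef) :
    M.toBlocks₂₂.PosDef := by
  have hpsd : M.toBlocks₂₂.PosSemidef := hM.posSemidef.submatrix Sum.inr
  refine PosDef.of_dotProduct_mulVec_pos hpsd.1 fun x hx => ?_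
  have hy : Sum.elim (0 : p → ℝ) x ≠ 0 := by
    intro h; apply hx; funext i; exact congrFun h (Sum.inr i)
  have h := hM.dotProduct_mulVec_pos hy
  rw [← fromBlocks_toBlocks M, fromBlocks_mulVec, Function.star_sumElim,
    sumElim_dotProduct_sumElim] at h
  simpa using h

lemma toBlocks₁₁_add (X Y : Matrix (p ⊕ q) (p ⊕ q) ℝ) :
    (X + Y).toBlocks₁₁ = X.toBlocks₁₁ + Y.toBlocks₁₁ := rfl

lemma toBlocks₂₂_add (X Y : Matrix (p ⊕ q) (p ⊕ q) ℝ) :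
    (X + Y).toBlocks₂₂ = X.toBlocks₂₂ + Y.toBlocks₂₂ := rfl

lemma fischer {M : Matrix (p ⊕ q) (p ⊕ q) ℝ} (hM : M.PosDef) :
    M.det ≤ M.toBlocks₁₁.det * M.toBlocks₂₂.det := by
  set A := M.toBlocks₁₁ with hAdef
  set B := M.toBlocks₁₂ with hBdef
  set Dm := M.toBlocks₂₂ with hDdef
  have hA : A.PosDef := toBlocks₁₁_posDef hM
  have hD : Dm.PosDef := toBlocks₂₂_posDef hM
  have h21 : M.toBlocks₂₁ = Bᴴ := by
    ext i j
    have := congrFun (congrFun hM.1 (Sum.inr i)) (Sum.inl j)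
    simpa [hBdef, toBlocks₂₁, toBlocks₁₂, conjTranspose_apply] using this.symm
  have hM' : M = fromBlocks A B Bᴴ Dm := by
    rw [← h21, hAdef, hBdef, hDdef, fromBlocks_toBlocks]
  haveI : Invertible A := A.invertibleOfIsUnitDet hA.det_pos.ne'.isUnit
  have hdet : M.det = A.det * (Dm - Bᴴ * A⁻¹ * B).det := by
    conv_lhs => rw [hM']
    rw [det_fromBlocks₁₁, invOf_eq_nonsing_inv]
  have hSchur : (Dm - Bᴴ * A⁻¹ * B).PosSemidef := by
    refine (PosDef.fromBlocks₁₁ B Dm hA).mp ?_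
    rw [← hM']; exact hM.posSemidef
  have hSchurDet : (Dm - Bᴴ * A⁻¹ * B).det ≠ 0 := by
    intro h0
    rw [h0, mul_zero] at hdet
    exact hM.det_pos.ne' hdet
  have hSchurPD := posDef_of_posSemidef_det_ne_zero hSchur hSchurDet
  have hdiff : (Dm - (Dm - Bᴴ * A⁻¹ * B)).PosSemidef := by
    rw [sub_sub_cancel]
    exact hA.inv.posSemidef.conjTranspose_mul_mul_same B
  have hle := det_le_det hSchurPD hdiff
  rw [hdet]
  nlinarith [hA.det_pos]

end Stmt9Aux

open Stmt9Aux

theorem stmt_9 {m1 m2 : ℕ}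
    (SS SU D Θ : Matrix (Fin m1 ⊕ Fin m2) (Fin m1 ⊕ Fin m2) ℝ)
    (hSS : SS.PosDef) (hSU : SU.PosDef) (hD : D.PosDef)
    (hDle : (SS - D).PosSemidef)
    (hΘpos : Θ.PosDef) (hΘle : (SS - Θ).PosSemidef)
    (hΘ1 : (D.toBlocks₁₁ - Θ.toBlocks₁₁).PosSemidef) :
    SS.det * (Θ.toBlocks₂₂ + SU.toBlocks₂₂).det /
        (Θ.det * (D.toBlocks₂₂ + SU.toBlocks₂₂).det) ≥
      (SS + SU).det /
        ((D.toBlocks₁₁ + SU.toBlocks₁₁).det * (D.toBlocks₂₂ + SU.toBlocks₂₂).det) := by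
  have hΘ1p : Θ.toBlocks₁₁.PosDef := toBlocks₁₁_posDef hΘpos
  have hΘ2p : Θ.toBlocks₂₂.PosDef := toBlocks₂₂_posDef hΘpos
  have hSU1 : SU.toBlocks₁₁.PosDef := toBlocks₁₁_posDef hSU
  have hSU2 : SU.toBlocks₂₂.PosDef := toBlocks₂₂_posDef hSU
  have hD1 : D.toBlocks₁₁.PosDef := toBlocks₁₁_posDef hD
  have hD2 : D.toBlocks₂₂.PosDef := toBlocks₂₂_posDef hD
  have hΘU : (Θ + SU).PosDef := hΘpos.add hSU
  have h1 : (SS + SU).det * Θ.det ≤ (Θ + SU).det * SS.det :=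
    ratio_le hΘpos hSS hSU hΘle
  have h2 : (Θ + SU).det ≤
      (Θ.toBlocks₁₁ + SU.toBlocks₁₁).det * (Θ.toBlocks₂₂ + SU.toBlocks₂₂).det := by
    have h := fischer hΘU
    rwa [toBlocks₁₁_add, toBlocks₂₂_add] at h
  have h3 : (Θ.toBlocks₁₁ + SU.toBlocks₁₁).det ≤ (D.toBlocks₁₁ + SU.toBlocks₁₁).det := by
    apply det_le_det (hΘ1p.add hSU1)
    have he : (D.toBlocks₁₁ + SU.toBlocks₁₁) - (Θ.toBlocks₁₁ + SU.toBlocks₁₁)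
        = D.toBlocks₁₁ - Θ.toBlocks₁₁ := by abel
    rw [he]; exact hΘ1
  have p1 : 0 < Θ.det := hΘpos.det_pos
  have p2 : 0 < SS.det := hSS.det_pos
  have p3 : 0 < (D.toBlocks₁₁ + SU.toBlocks₁₁).det := (hD1.add hSU1).det_pos
  have p4 : 0 < (D.toBlocks₂₂ + SU.toBlocks₂₂).det := (hD2.add hSU2).det_pos
  have p5 : 0 < (Θ.toBlocks₂₂ + SU.toBlocks₂₂).det := (hΘ2p.add hSU2).det_pos
  have p6 : 0 < (Θ.toBlocks₁₁ + SU.toBlocks₁₁).det := (hΘ1p.add hSU1).det_pos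
  rw [ge_iff_le, div_le_div_iff₀ (by positivity) (by positivity)]
  have c2 : (Θ + SU).det * SS.det ≤
      (Θ.toBlocks₁₁ + SU.toBlocks₁₁).det * (Θ.toBlocks₂₂ + SU.toBlocks₂₂).det * SS.det :=
    mul_le_mul_of_nonneg_right h2 p2.le
  have c3 : (Θ.toBlocks₁₁ + SU.toBlocks₁₁).det * (Θ.toBlocks₂₂ + SU.toBlocks₂₂).det * SS.det
      ≤ (D.toBlocks₁₁ + SU.toBlocks₁₁).det * (Θ.toBlocks₂₂ + SU.toBlocks₂₂).det * SS.det := by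
    have := mul_le_mul_of_nonneg_right (mul_le_mul_of_nonneg_right h3 p5.le) p2.le
    linarith
  have key : (SS + SU).det * Θ.det ≤
      (D.toBlocks₁₁ + SU.toBlocks₁₁).det * (Θ.toBlocks₂₂ + SU.toBlocks₂₂).det * SS.det := by
    linarith
  have fin := mul_le_mul_of_nonneg_right key p4.le
  nlinarith [fin]
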